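/- Let C be a linear code over Z_{p^s} in which every codeword has additive order dividing p^{s-1} (i.e., C ⊆ p·Z_{p^s}^n). Then the Gray image φ_L(C) is self-orthogonal in F_p^{n·p^{s-1}}: for all v, w ∈ C, ⟨φ_L(v), φ_L(w)⟩ = 0 in F_p. -/

import Mathlib

/-- The extended Lee weight on `ZMod (p^s)`. -/
def leeWt (p s : ℕ) (x : ZMod (p ^ s)) : ℕ :=
  if x.val ≤ p ^ s - p ^ (s - 1) then min x.val (p ^ (s - 1)) else p ^ s - x.val

/-- The Gray map `φ_L : ZMod (p^s) → (F_p)^(p^(s-1))`: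
`x = q·p^(s-1) + r` maps to the vector with `q+1` in the first `r` coordinates
and `q` in the rest. -/
def gray (p s : ℕ) (x : ZMod (p ^ s)) : Fin (p ^ (s - 1)) → ZMod p :=
  fun i =>
    if i.val < x.val % p ^ (s - 1) then ((x.val / p ^ (s - 1) + 1 : ℕ) : ZMod p)
    else ((x.val / p ^ (s - 1) : ℕ) : ZMod p)

/-- The Gray map extended coordinatewise to vectors. -/
def grayV (p s n : ℕ) (v : Fin n → ZMod (p ^ s)) : Fin n → Fin (p ^ (s - 1)) → ZMod p :=
  fun i => gray p s (v i)

lemma sum_indicator (p m r : ℕ) (hr : r ≤ m) :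
    ∑ j : Fin m, (if j.val < r then (1 : ZMod p) else 0) = (r : ZMod p) := by
  rw [Fin.sum_univ_eq_sum_range (fun j => if j < r then (1 : ZMod p) else 0)]
  rw [← Finset.sum_filter]
  have : Finset.filter (fun j => j < r) (Finset.range m) = Finset.range r := by
    ext j; simp; omega
  simp [this]

lemma gray_eq (p s : ℕ) (x : ZMod (p ^ s)) (j : Fin (p ^ (s - 1))) :
    gray p s x j = ((x.val / p ^ (s - 1) : ℕ) : ZMod p) +
      (if j.val < x.val % p ^ (s - 1) then (1 : ZMod p) else 0) := by
  unfold gray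
  split <;> push_cast <;> ring

lemma gray_dot (p s : ℕ) (hp : p.Prime) (hs : 2 ≤ s) (x y : ZMod (p ^ s))
    (hx : p ∣ x.val) (hy : p ∣ y.val) :
    ∑ j, gray p s x j * gray p s y j = 0 := by
  have hm : p ∣ p ^ (s - 1) := dvd_pow_self p (by omega)
  set m := p ^ (s - 1) with hmdef
  have hrx : p ∣ x.val % m := (Nat.dvd_mod_iff hm).mpr hx
  have hry : p ∣ y.val % m := (Nat.dvd_mod_iff hm).mpr hy
  have hmpos : 0 < m := pow_pos hp.pos _
  have hrx' : x.val % m ≤ m := le_of_lt (Nat.mod_lt _ hmpos)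
  have hry' : y.val % m ≤ m := le_of_lt (Nat.mod_lt _ hmpos)
  have cast0 : ∀ k : ℕ, p ∣ k → (k : ZMod p) = 0 := fun k hk =>
    (ZMod.natCast_eq_zero_iff k p).mpr hk
  calc ∑ j, gray p s x j * gray p s y j
      = ∑ j : Fin m, (((x.val / m : ℕ) : ZMod p) + (if j.val < x.val % m then 1 else 0)) *
          (((y.val / m : ℕ) : ZMod p) + (if j.val < y.val % m then 1 else 0)) := by
        refine Finset.sum_congr rfl fun j _ => ?_
        rw [gray_eq, gray_eq]
    _ = ∑ j : Fin m, (((x.val / m : ℕ) : ZMod p) * ((y.val / m : ℕ) : ZMod p)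
          + ((x.val / m : ℕ) : ZMod p) * (if j.val < y.val % m then 1 else 0)
          + (if j.val < x.val % m then 1 else 0) * ((y.val / m : ℕ) : ZMod p)
          + (if j.val < min (x.val % m) (y.val % m) then (1 : ZMod p) else 0)) := by
        refine Finset.sum_congr rfl fun j _ => ?_
        have : (if j.val < x.val % m then (1 : ZMod p) else 0) *
            (if j.val < y.val % m then 1 else 0) =
            (if j.val < min (x.val % m) (y.val % m) then (1 : ZMod p) else 0) := by
          split_ifs with h1 h2 h3 h3 h2 h3 h3 <;> simp_all <;> omega
        rw [← this]; ring
    _ = 0 := by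
        simp only [Finset.sum_add_distrib, Finset.sum_const, Finset.card_univ,
          Fintype.card_fin, ← Finset.mul_sum, ← Finset.sum_mul,
          sum_indicator p m _ hrx', sum_indicator p m _ hry',
          sum_indicator p m _ (le_trans (min_le_left _ _) hrx')]
        have hmin : p ∣ min (x.val % m) (y.val % m) := by
          rcases min_choice (x.val % m) (y.val % m) with h | h <;> rw [h] <;> assumption
        simp [cast0 _ hm, cast0 _ hrx, cast0 _ hry, cast0 _ hmin, nsmul_eq_mul]

theorem grayV_selfOrthogonal (p s n : ℕ) (hp : p.Prime) (hs : 2 ≤ s)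
    (C : Submodule (ZMod (p ^ s)) (Fin n → ZMod (p ^ s)))
    (hC : ∀ v ∈ C, (p ^ (s - 1) : ℕ) • v = 0) :
    ∀ v ∈ C, ∀ w ∈ C,
      ∑ i, ∑ j, grayV p s n v i j * grayV p s n w i j = 0 := by
  have hps : p ^ s ≠ 0 := pow_ne_zero _ hp.pos.ne'
  haveI : NeZero (p ^ s) := ⟨hps⟩
  have key : ∀ v ∈ C, ∀ i, p ∣ (v i).val := by
    intro v hv i
    have h := congrFun (hC v hv) i
    simp only [Pi.smul_apply, Pi.zero_apply] at h
    have h2 : ((p ^ (s - 1) * (v i).val : ℕ) : ZMod (p ^ s)) = 0 := by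
      rw [Nat.cast_mul, ZMod.natCast_val, ZMod.cast_id]
      rwa [nsmul_eq_mul] at h
    have h3 : p ^ s ∣ p ^ (s - 1) * (v i).val :=
      (ZMod.natCast_eq_zero_iff _ _).mp h2
    have hss : p ^ s = p ^ (s - 1) * p := by
      rw [← pow_succ]
      congr 1
      omega
    obtain ⟨k, hk⟩ := h3
    refine ⟨k, ?_⟩
    apply Nat.eq_of_mul_eq_mul_left (pow_pos hp.pos (s-1))
    rw [hk, hss]; ring
  intro v hv w hw
  refine Finset.sum_eq_zero fun i _ => ?_
  exact gray_dot p s hp hs (v i) (w i) (key v hv i) (key w hw i)
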